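/- Let G be a finite simple bipartite graph with parts A and B such that every vertex of A has degree 3 and every vertex of B has degree 2, and let n = |A|. Let μ(G) denote the maximum size of a subset of B whose vertices have pairwise disjoint neighborhoods in G. Then the maximum of |N(S)| over all S ⊆ B with |S| ≤ |B| − n such that the bipartite subgraph induced on A ∪ (B \ S) contains a matching saturating A, equals n/2 + μ(G). -/

import Mathlib

open Finset

/-- The vertices of `B'` have pairwise disjoint neighborhoods in `G`. -/
def PDisjNbrs {V : Type*} (G : SimpleGraph V) (B' : Finset V) : Prop :=
  ∀ b₁ ∈ B', ∀ b₂ ∈ B', b₁ ≠ b₂ → ∀ a, ¬(G.Adj a b₁ ∧ G.Adj a b₂)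

/-- `N(S)`: the vertices of `A` adjacent to at least one vertex of `S`. -/
def nbhd {V : Type*} [DecidableEq V] (G : SimpleGraph V) [DecidableRel G.Adj]
    (A S : Finset V) : Finset V :=
  A.filter fun a => ∃ b ∈ S, G.Adj a b

/-- The bipartite subgraph of `G` induced on `A ∪ C` contains a matching saturating
every vertex of `A`, encoded by an injective choice of partners. -/
def SatMatch {V : Type*} (G : SimpleGraph V) (A C : Finset V) : Prop :=
  ∃ f : V → V, Set.InjOn f ↑A ∧ ∀ a ∈ A, f a ∈ C ∧ G.Adj a (f a)

set_option linter.unusedSectionVars false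
set_option maxHeartbeats 1000000

section Aux

variable {V : Type*} [Fintype V] [DecidableEq V] (G : SimpleGraph V)
    [DecidableRel G.Adj] (A B : Finset V) (hdisj : Disjoint A B)
    (hbip : ∀ v w, G.Adj v w → (v ∈ A ∧ w ∈ B) ∨ (v ∈ B ∧ w ∈ A))

include hdisj hbip

/-- For `b ∈ B`, the `A`-neighborhood of `b` is its full neighborhood. -/
lemma nbA_eq (b : V) (hb : b ∈ B) :
    A.filter (fun a => G.Adj a b) = G.neighborFinset b := by
  ext w
  simp only [mem_filter, SimpleGraph.mem_neighborFinset]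
  constructor
  · rintro ⟨-, h⟩; exact h.symm
  · intro h
    refine ⟨?_, h.symm⟩
    rcases hbip b w h with ⟨h1, -⟩ | ⟨-, h2⟩
    · exact absurd hb (Finset.disjoint_left.mp hdisj h1)
    · exact h2

lemma nbB_eq (a : V) (ha : a ∈ A) :
    B.filter (fun b => G.Adj a b) = G.neighborFinset a := by
  ext w
  simp only [mem_filter, SimpleGraph.mem_neighborFinset]
  constructor
  · rintro ⟨-, h⟩; exact h
  · intro h
    refine ⟨?_, h⟩
    rcases hbip a w h with ⟨-, h2⟩ | ⟨h1, -⟩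
    · exact h2
    · exact absurd ha (Finset.disjoint_right.mp hdisj h1)

variable (hdegB : ∀ b ∈ B, G.degree b = 2)
include hdegB

lemma nbA_card (b : V) (hb : b ∈ B) :
    (A.filter (fun a => G.Adj a b)).card = 2 := by
  rw [nbA_eq G A B hdisj hbip b hb, SimpleGraph.card_neighborFinset_eq_degree]
  exact hdegB b hb

variable (hdegA : ∀ a ∈ A, G.degree a = 3)
include hdegA

lemma handshake : 2 * B.card = 3 * A.card := by
  have key : ∑ a ∈ A, (B.filter (fun b => G.Adj a b)).card
      = ∑ b ∈ B, (A.filter (fun a => G.Adj a b)).card := by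
    simp only [Finset.card_filter]
    exact Finset.sum_comm
  have h1 : ∑ a ∈ A, (B.filter (fun b => G.Adj a b)).card = 3 * A.card := by
    rw [Finset.sum_congr rfl (fun a ha => by
      rw [nbB_eq G A B hdisj hbip a ha, SimpleGraph.card_neighborFinset_eq_degree,
        hdegA a ha])]
    simp [mul_comm]
  have h2 : ∑ b ∈ B, (A.filter (fun a => G.Adj a b)).card = 2 * B.card := by
    rw [Finset.sum_congr rfl (fun b hb => nbA_card G A B hdisj hbip hdegB b hb)]
    simp [mul_comm]
  omega

end Aux


section Aux

variable {V : Type*} [Fintype V] [DecidableEq V] (G : SimpleGraph V)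
    [DecidableRel G.Adj] (A B : Finset V)

lemma nbhd_eq_biUnion (M : Finset V) :
    nbhd G A M = M.biUnion (fun b => A.filter (fun a => G.Adj a b)) := by
  ext a
  simp only [nbhd, mem_filter, mem_biUnion]
  tauto

lemma nbhd_subset (M : Finset V) : nbhd G A M ⊆ A := filter_subset _ _

lemma nbhd_mono {S T : Finset V} (h : S ⊆ T) : nbhd G A S ⊆ nbhd G A T := by
  intro a ha
  simp only [nbhd, mem_filter] at ha ⊢
  obtain ⟨h1, b, hb, h2⟩ := ha
  exact ⟨h1, b, h hb, h2⟩

lemma pdisj_nbhd_card (hcard : ∀ b ∈ B, (A.filter (fun a => G.Adj a b)).card = 2)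
    (M : Finset V) (hMB : M ⊆ B) (hM : PDisjNbrs G M) :
    (nbhd G A M).card = 2 * M.card := by
  rw [nbhd_eq_biUnion, Finset.card_biUnion]
  · rw [Finset.sum_congr rfl (fun b hb => hcard b (hMB hb))]
    simp [mul_comm]
  · intro b1 h1 b2 h2 hne
    rw [Function.onFun, Finset.disjoint_left]
    intro a ha1 ha2
    exact hM b1 h1 b2 h2 hne a ⟨(mem_filter.mp ha1).2, (mem_filter.mp ha2).2⟩

/-- Upper bound: `|N(S)| ≤ |S| + mu`. -/
lemma nbhd_card_le (hcard : ∀ b ∈ B, (A.filter (fun a => G.Adj a b)).card = 2)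
    (mu : ℕ) (hmu₂ : ∀ B' ⊆ B, PDisjNbrs G B' → B'.card ≤ mu)
    (hdisj : Disjoint A B)
    (hbip : ∀ v w, G.Adj v w → (v ∈ A ∧ w ∈ B) ∨ (v ∈ B ∧ w ∈ A))
    (S : Finset V) (hSB : S ⊆ B) :
    (nbhd G A S).card ≤ S.card + mu := by
  classical
  -- maximal pairwise-disjoint subset of S
  obtain ⟨M, hMmem, hMmax⟩ := Finset.exists_max_image
    ((S.powerset).filter (fun M => PDisjNbrs G M)) Finset.card
    ⟨∅, by simp [PDisjNbrs]⟩
  rw [mem_filter, Finset.mem_powerset] at hMmem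
  obtain ⟨hMS, hMpd⟩ := hMmem
  -- every b in S \ M shares a neighbor with M
  have hshare : ∀ b ∈ S \ M, ∃ a ∈ nbhd G A M, G.Adj a b := by
    intro b hb
    rw [mem_sdiff] at hb
    obtain ⟨hbS, hbM⟩ := hb
    by_contra hcon
    push_neg at hcon
    have : PDisjNbrs G (insert b M) := by
      intro b1 h1 b2 h2 hne a ⟨ha1, ha2⟩
      rw [mem_insert] at h1 h2
      have hb1B : b1 ∈ B := by
        rcases h1 with rfl | h1
        · exact hSB hbS
        · exact hSB (hMS h1)
      rcases hbip a b1 ha1 with ⟨h, -⟩ | ⟨-, h⟩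
      case inr => exact absurd h (Finset.disjoint_right.mp hdisj hb1B)
      have haA : a ∈ A := h
      rcases h1 with rfl | h1
      · rcases h2 with rfl | h2
        · exact hne rfl
        · exact hcon a (mem_filter.mpr ⟨haA, b2, h2, ha2⟩) ha1
      · rcases h2 with rfl | h2
        · exact hcon a (mem_filter.mpr ⟨haA, b1, h1, ha1⟩) ha2
        · exact hMpd b1 h1 b2 h2 hne a ⟨ha1, ha2⟩
    have hmem : insert b M ∈ (S.powerset).filter (fun M => PDisjNbrs G M) := by
      rw [mem_filter, Finset.mem_powerset]
      exact ⟨insert_subset hbS hMS, this⟩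
    have := hMmax _ hmem
    rw [Finset.card_insert_of_notMem hbM] at this
    omega
  -- counting
  have hsub : nbhd G A S ⊆ nbhd G A M ∪
      (S \ M).biUnion (fun b => A.filter (fun a => G.Adj a b) \ nbhd G A M) := by
    intro a ha
    rw [mem_union]
    by_cases haM : a ∈ nbhd G A M
    · exact Or.inl haM
    · right
      obtain ⟨haA, b, hbS, hab⟩ := mem_filter.mp ha
      rw [mem_biUnion]
      have hbM : b ∉ M := fun h => haM (mem_filter.mpr ⟨haA, b, h, hab⟩)
      exact ⟨b, mem_sdiff.mpr ⟨hbS, hbM⟩, mem_sdiff.mpr ⟨mem_filter.mpr ⟨haA, hab⟩, haM⟩⟩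
  have hone : ∀ b ∈ S \ M,
      (A.filter (fun a => G.Adj a b) \ nbhd G A M).card ≤ 1 := by
    intro b hb
    obtain ⟨a, haM, hab⟩ := hshare b hb
    have haA : a ∈ A := (mem_filter.mp haM).1
    have hsub2 : A.filter (fun a => G.Adj a b) \ nbhd G A M
        ⊆ (A.filter (fun a => G.Adj a b)).erase a := by
      intro x hx
      rw [mem_sdiff] at hx
      rw [Finset.mem_erase]
      exact ⟨fun h => hx.2 (h ▸ haM), hx.1⟩
    calc (A.filter (fun a => G.Adj a b) \ nbhd G A M).card
        ≤ ((A.filter (fun a => G.Adj a b)).erase a).card := Finset.card_le_card hsub2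
      _ = (A.filter (fun a => G.Adj a b)).card - 1 :=
          Finset.card_erase_of_mem (mem_filter.mpr ⟨haA, hab⟩)
      _ ≤ 1 := by rw [hcard b (hSB (mem_sdiff.mp hb).1)]
  have hMmu : M.card ≤ mu := hmu₂ M (hMS.trans hSB) hMpd
  have hMS' : M.card ≤ S.card := Finset.card_le_card hMS
  calc (nbhd G A S).card
      ≤ (nbhd G A M ∪ (S \ M).biUnion
          (fun b => A.filter (fun a => G.Adj a b) \ nbhd G A M)).card :=
        Finset.card_le_card hsub
    _ ≤ (nbhd G A M).card + ((S \ M).biUnion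
          (fun b => A.filter (fun a => G.Adj a b) \ nbhd G A M)).card :=
        Finset.card_union_le _ _
    _ ≤ 2 * M.card + ∑ b ∈ S \ M, (A.filter (fun a => G.Adj a b) \ nbhd G A M).card := by
        rw [pdisj_nbhd_card G A B hcard M (hMS.trans hSB) hMpd]
        exact Nat.add_le_add_left (Finset.card_biUnion_le) _
    _ ≤ 2 * M.card + (S \ M).card := by
        refine Nat.add_le_add_left ?_ _
        calc ∑ b ∈ S \ M, (A.filter (fun a => G.Adj a b) \ nbhd G A M).card
            ≤ ∑ _b ∈ S \ M, 1 := Finset.sum_le_sum hone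
          _ = (S \ M).card := by simp
    _ = 2 * M.card + (S.card - M.card) := by rw [Finset.card_sdiff_of_subset hMS]
    _ ≤ S.card + mu := by omega

end Aux


section Constr

variable {V : Type*} [Fintype V] [DecidableEq V] (G : SimpleGraph V)
    [DecidableRel G.Adj] (A B : Finset V)

/-- The construction of a good `S`. -/
lemma exists_good_S
    (hcard : ∀ b ∈ B, (A.filter (fun a => G.Adj a b)).card = 2)
    (hcard3 : ∀ a ∈ A, (B.filter (fun b => G.Adj a b)).card = 3)
    (hhs : 2 * B.card = 3 * A.card)
    (M : Finset V) (hMB : M ⊆ B) (hMpd : PDisjNbrs G M)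
    (hpd2 : (nbhd G A M).card = 2 * M.card) :
    ∃ S ⊆ B, S.card ≤ B.card - A.card ∧ SatMatch G A (B \ S) ∧
      A.card / 2 + M.card ≤ (nbhd G A S).card := by
  classical
  set m := B.card - A.card with hm
  have hn : A.card = 2 * m := by omega
  have hB3 : B.card = 3 * m := by omega
  set μ := M.card with hμ
  have hμm : μ ≤ m := by
    have h1 : (nbhd G A M).card ≤ A.card := Finset.card_le_card (filter_subset _ _)
    omega
  set k := m - μ with hk
  set D := B \ M with hD
  have hDB : D ⊆ B := sdiff_subset
  have hDcard : D.card = 3 * m - μ := by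
    rw [hD, Finset.card_sdiff_of_subset hMB]; omega
  set U := A \ nbhd G A M with hU
  have hUA : U ⊆ A := sdiff_subset
  have hnbA : nbhd G A M ⊆ A := filter_subset _ _
  have hUcard : U.card = 2 * k := by
    rw [hU, Finset.card_sdiff_of_subset hnbA]; omega
  set N : V → Finset V := fun b => A.filter (fun a => G.Adj a b) with hN
  have hNA : ∀ b, N b ⊆ A := fun b => filter_subset _ _
  -- the Hall system
  set t : {b // b ∈ D} ⊕ Fin k → Finset (V × Fin 2) :=
    Sum.elim (fun b => (N b.1) ×ˢ {0} ∪ ((N b.1 ∩ U) ×ˢ {1}))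
      (fun _ => U ×ˢ {1}) with ht
  -- degree bound in D
  have hdegD : ∀ a ∈ A, (D.filter (fun b => G.Adj a b)).card
      ≤ 2 + (if a ∈ U then 1 else 0) := by
    intro a ha
    have hsplit : (M.filter (fun b => G.Adj a b)).card
        + (D.filter (fun b => G.Adj a b)).card = 3 := by
      rw [← Finset.card_union_of_disjoint (Finset.disjoint_filter_filter
        Finset.disjoint_sdiff), ← Finset.filter_union,
        Finset.union_sdiff_of_subset hMB, hcard3 a ha]
    by_cases haU : a ∈ U
    · simp only [haU, if_true]
      omega
    · simp only [haU, if_false]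
      have haM : a ∈ nbhd G A M := by
        rw [hU, mem_sdiff] at haU
        tauto
      have h1 : (M.filter (fun b => G.Adj a b)).Nonempty := by
        obtain ⟨-, b, hb, hab⟩ := mem_filter.mp haM
        exact ⟨b, mem_filter.mpr ⟨hb, hab⟩⟩
      have := Finset.card_pos.mpr h1
      omega
  -- Hall's condition
  have hall : ∀ s : Finset ({b // b ∈ D} ⊕ Fin k), s.card ≤ (s.biUnion t).card := by
    intro s
    set E := s.toLeft with hE
    set R := s.toRight with hR
    set E' : Finset V := E.image Subtype.val with hE'
    have hE'card : E'.card = E.card :=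
      Finset.card_image_of_injective _ Subtype.val_injective
    have hE'D : E' ⊆ D := by
      intro b hb
      obtain ⟨b', -, rfl⟩ := Finset.mem_image.mp hb
      exact b'.2
    set VE := E'.biUnion N with hVE
    have hVEA : VE ⊆ A := by
      intro a ha
      obtain ⟨b, -, hab⟩ := Finset.mem_biUnion.mp ha
      exact hNA b hab
    set q := (VE ∩ U).card with hq
    -- the double counting
    have hcount : 2 * E'.card ≤ 2 * VE.card + q := by
      have e1 : ∑ b ∈ E', (N b).card = 2 * E'.card := by
        rw [Finset.sum_congr rfl (fun b hb => hcard b (hDB (hE'D hb)))]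
        simp [mul_comm]
      have e2 : ∑ b ∈ E', (N b).card = ∑ a ∈ A, (E'.filter (fun b => G.Adj a b)).card := by
        simp only [hN, Finset.card_filter]
        exact Finset.sum_comm
      have e3 : ∑ a ∈ A, (E'.filter (fun b => G.Adj a b)).card
          = ∑ a ∈ VE, (E'.filter (fun b => G.Adj a b)).card := by
        symm
        apply Finset.sum_subset hVEA
        intro a ha hnVE
        rw [Finset.card_eq_zero, Finset.filter_eq_empty_iff]
        intro b hb hab
        exact hnVE (Finset.mem_biUnion.mpr ⟨b, hb, mem_filter.mpr ⟨ha, hab⟩⟩)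
      have e4 : ∀ a ∈ VE, (E'.filter (fun b => G.Adj a b)).card
          ≤ 2 + (if a ∈ U then 1 else 0) := by
        intro a ha
        exact le_trans (Finset.card_le_card (Finset.filter_subset_filter _ hE'D))
          (hdegD a (hVEA ha))
      have e5 : ∑ a ∈ VE, (2 + (if a ∈ U then 1 else 0)) = 2 * VE.card + q := by
        rw [Finset.sum_add_distrib]
        congr 1
        · simp [mul_comm]
        · rw [hq, ← Finset.filter_mem_eq_inter, Finset.card_filter]
      calc 2 * E'.card = ∑ a ∈ VE, (E'.filter (fun b => G.Adj a b)).card := by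
            rw [← e3, ← e2, e1]
        _ ≤ ∑ a ∈ VE, (2 + (if a ∈ U then 1 else 0)) := Finset.sum_le_sum e4
        _ = 2 * VE.card + q := e5
    -- lower bounds for the biUnion
    have hsub0 : VE ×ˢ ({0} : Finset (Fin 2)) ⊆ s.biUnion t := by
      intro p hp
      rw [Finset.mem_product] at hp
      obtain ⟨hp1, hp2⟩ := hp
      obtain ⟨b, hbE', hpN⟩ := Finset.mem_biUnion.mp hp1
      obtain ⟨b', hb'E, rfl⟩ := Finset.mem_image.mp hbE'
      refine Finset.mem_biUnion.mpr ⟨Sum.inl b', Finset.mem_toLeft.mp hb'E, ?_⟩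
      simp only [ht, Sum.elim_inl]
      exact Finset.mem_union_left _ (Finset.mem_product.mpr ⟨hpN, hp2⟩)
    have hsub1 : (VE ∩ U) ×ˢ ({1} : Finset (Fin 2)) ⊆ s.biUnion t := by
      intro p hp
      rw [Finset.mem_product] at hp
      obtain ⟨hp1, hp2⟩ := hp
      rw [Finset.mem_inter] at hp1
      obtain ⟨b, hbE', hpN⟩ := Finset.mem_biUnion.mp hp1.1
      obtain ⟨b', hb'E, rfl⟩ := Finset.mem_image.mp hbE'
      refine Finset.mem_biUnion.mpr ⟨Sum.inl b', Finset.mem_toLeft.mp hb'E, ?_⟩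
      simp only [ht, Sum.elim_inl]
      exact Finset.mem_union_right _
        (Finset.mem_product.mpr ⟨Finset.mem_inter.mpr ⟨hpN, hp1.2⟩, hp2⟩)
    have hscard : E.card + R.card = s.card := Finset.card_toLeft_add_card_toRight
    rcases R.eq_empty_or_nonempty with hRe | hRne
    · have hdisj01 : Disjoint (VE ×ˢ ({0} : Finset (Fin 2)))
          ((VE ∩ U) ×ˢ ({1} : Finset (Fin 2))) := by
        rw [Finset.disjoint_left]
        rintro ⟨a, i⟩ h1 h2
        rw [Finset.mem_product, Finset.mem_singleton] at h1 h2
        rw [h1.2] at h2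
        exact absurd h2.2 (by decide)
      have hge := Finset.card_le_card (Finset.union_subset hsub0 hsub1)
      simp only [Finset.card_union_of_disjoint hdisj01, Finset.card_product,
        Finset.card_singleton, mul_one] at hge
      rw [hRe] at hscard
      simp only [Finset.card_empty] at hscard
      omega
    · obtain ⟨r, hr⟩ := hRne
      have hsubU : U ×ˢ ({1} : Finset (Fin 2)) ⊆ s.biUnion t := by
        intro p hp
        refine Finset.mem_biUnion.mpr ⟨Sum.inr r, Finset.mem_toRight.mp hr, ?_⟩
        simpa only [ht, Sum.elim_inr] using hp
      have hdisj01 : Disjoint (VE ×ˢ ({0} : Finset (Fin 2)))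
          (U ×ˢ ({1} : Finset (Fin 2))) := by
        rw [Finset.disjoint_left]
        rintro ⟨a, i⟩ h1 h2
        rw [Finset.mem_product, Finset.mem_singleton] at h1 h2
        rw [h1.2] at h2
        exact absurd h2.2 (by decide)
      have hge := Finset.card_le_card (Finset.union_subset hsub0 hsubU)
      simp only [Finset.card_union_of_disjoint hdisj01, Finset.card_product,
        Finset.card_singleton, mul_one] at hge
      have hRk : R.card ≤ k := by
        simpa using Finset.card_le_univ R
      have hqU : q ≤ 2 * k := by
        rw [hq, ← hUcard]
        exact Finset.card_le_card Finset.inter_subset_right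
      omega
  -- apply Hall's theorem
  obtain ⟨F, hFinj, hFmem⟩ :=
    (Finset.all_card_le_biUnion_card_iff_exists_injective t).mp hall
  -- F is surjective onto the slots
  set Target := (A ×ˢ ({0} : Finset (Fin 2))) ∪ (U ×ˢ ({1} : Finset (Fin 2)))
    with hTar
  have htT : ∀ x, t x ⊆ Target := by
    intro x
    cases x with
    | inl b =>
      simp only [ht, Sum.elim_inl, hTar]
      apply Finset.union_subset
      · exact (Finset.product_subset_product_left (hNA b.1)).trans
          Finset.subset_union_left
      · exact (Finset.product_subset_product_left
          (Finset.inter_subset_right)).trans Finset.subset_union_right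
    | inr r =>
      simp only [ht, Sum.elim_inr, hTar]
      exact Finset.subset_union_right
  have himgsub : Finset.univ.image F ⊆ Target := by
    intro p hp
    obtain ⟨x, -, rfl⟩ := Finset.mem_image.mp hp
    exact htT x (hFmem x)
  have hTardisj : Disjoint (A ×ˢ ({0} : Finset (Fin 2)))
      (U ×ˢ ({1} : Finset (Fin 2))) := by
    rw [Finset.disjoint_left]
    rintro ⟨a, i⟩ h1 h2
    rw [Finset.mem_product, Finset.mem_singleton] at h1 h2
    rw [h1.2] at h2
    exact absurd h2.2 (by decide)
  have himg : Finset.univ.image F = Target := by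
    apply Finset.eq_of_subset_of_card_le himgsub
    have h1 : Target.card = 4 * m - 2 * μ := by
      rw [hTar, Finset.card_union_of_disjoint hTardisj]
      simp only [Finset.card_product, Finset.card_singleton, mul_one]
      omega
    have h2 : (Finset.univ.image F).card = 4 * m - 2 * μ := by
      rw [Finset.card_image_of_injective _ hFinj, Finset.card_univ,
        Fintype.card_sum, Fintype.card_coe, Fintype.card_fin]
      omega
    omega
  have hprim : ∀ a ∈ A, ∃ b : {b // b ∈ D}, F (Sum.inl b) = (a, (0 : Fin 2)) := by
    intro a ha
    have hmem : (a, (0 : Fin 2)) ∈ Finset.univ.image F := by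
      rw [himg, hTar]
      exact Finset.mem_union_left _
        (Finset.mem_product.mpr ⟨ha, Finset.mem_singleton_self _⟩)
    obtain ⟨x, -, hx⟩ := Finset.mem_image.mp hmem
    cases x with
    | inl b => exact ⟨b, hx⟩
    | inr r =>
      exfalso
      have h2 := hFmem (Sum.inr r)
      simp only [ht, Sum.elim_inr] at h2
      rw [hx, Finset.mem_product, Finset.mem_singleton] at h2
      exact absurd h2.2 (by decide : ¬ (0 : Fin 2) = 1)
  choose g hg using hprim
  set f : V → V := fun a => if h : a ∈ A then (g a h).val else a with hf
  have hfa : ∀ (a : V) (ha : a ∈ A), f a = (g a ha).val := by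
    intro a ha
    simp only [hf, dif_pos ha]
  -- location of slots
  have hloc : ∀ b : {b // b ∈ D},
      ((F (Sum.inl b)).2 = 0 ∧ (F (Sum.inl b)).1 ∈ N b.1) ∨
      ((F (Sum.inl b)).2 = 1 ∧ (F (Sum.inl b)).1 ∈ N b.1 ∩ U) := by
    intro b
    have h2 := hFmem (Sum.inl b)
    simp only [ht, Sum.elim_inl, Finset.mem_union, Finset.mem_product,
      Finset.mem_singleton] at h2
    tauto
  have hfinj : Set.InjOn f ↑A := by
    intro a ha a' ha' heq
    rw [Finset.mem_coe] at ha ha'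
    rw [hfa a ha, hfa a' ha'] at heq
    have hgeq : g a ha = g a' ha' := Subtype.ext heq
    have h2 : ((a : V), (0 : Fin 2)) = ((a' : V), (0 : Fin 2)) := by
      rw [← hg a ha, ← hg a' ha', hgeq]
    exact (Prod.ext_iff.mp h2).1
  -- the sets Tsub / Zsub
  set Tsub : Finset {b // b ∈ D} :=
    Finset.univ.filter (fun b => (F (Sum.inl b)).2 = 1) with hTsub
  set Zsub : Finset {b // b ∈ D} :=
    Finset.univ.filter (fun b => (F (Sum.inl b)).2 = 0) with hZsub
  have hfin2 : ∀ x : Fin 2, (x = 1) ↔ ¬ (x = 0) := by decide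
  have hsplit : Zsub.card + Tsub.card = D.card := by
    rw [hTsub, hZsub, Finset.filter_congr
      (fun b _ => hfin2 ((F (Sum.inl b)).2)),
      Finset.card_filter_add_card_filter_not, Finset.card_univ,
      Fintype.card_coe]
  have hZcard : Zsub.card = 2 * m := by
    have himgZ : Zsub.image (fun b => (F (Sum.inl b)).1) = A := by
      apply Finset.Subset.antisymm
      · intro a ha
        obtain ⟨b, hb, rfl⟩ := Finset.mem_image.mp ha
        rw [hZsub, Finset.mem_filter] at hb
        rcases hloc b with ⟨-, h2⟩ | ⟨h1, -⟩
        · exact hNA b.1 h2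
        · rw [hb.2] at h1
          exact absurd h1 (by decide : ¬ (0 : Fin 2) = 1)
      · intro a ha
        refine Finset.mem_image.mpr ⟨g a ha, ?_, by rw [hg a ha]⟩
        rw [hZsub, Finset.mem_filter, hg a ha]
        exact ⟨Finset.mem_univ _, rfl⟩
    have hinj : Set.InjOn (fun b : {b // b ∈ D} => (F (Sum.inl b)).1) ↑Zsub := by
      intro b hb b' hb' heq
      rw [Finset.mem_coe, hZsub, Finset.mem_filter] at hb hb'
      have : F (Sum.inl b) = F (Sum.inl b') :=
        Prod.ext heq (by rw [hb.2, hb'.2])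
      exact Sum.inl.inj (hFinj this)
    have := Finset.card_image_of_injOn hinj
    rw [himgZ] at this
    omega
  have hTk : Tsub.card = k := by omega
  set T : Finset V := Tsub.image Subtype.val with hT
  have hTcard : T.card = k := by
    rw [hT, Finset.card_image_of_injective _ Subtype.val_injective, hTk]
  have hTD : T ⊆ D := by
    intro b hb
    obtain ⟨b', -, rfl⟩ := Finset.mem_image.mp hb
    exact b'.2
  set S : Finset V := M ∪ T with hS
  have hSB : S ⊆ B := Finset.union_subset hMB (hTD.trans hDB)
  have hScard : S.card ≤ m := by
    have h2 : S.card ≤ M.card + T.card := Finset.card_union_le M T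
    omega
  -- the matching property
  have hfBS : ∀ a ∈ A, f a ∈ B \ S ∧ G.Adj a (f a) := by
    intro a ha
    have hfeq := hfa a ha
    have hgD : (g a ha).val ∈ D := (g a ha).2
    have hadj : G.Adj a (f a) := by
      rcases hloc (g a ha) with ⟨-, h2⟩ | ⟨h1, -⟩
      · rw [hg a ha] at h2
        rw [hfeq]
        exact (Finset.mem_filter.mp h2).2
      · rw [hg a ha] at h1
        exact absurd h1 (by decide : ¬ ((0 : Fin 2) = 1))
    refine ⟨Finset.mem_sdiff.mpr ⟨hDB (hfeq ▸ hgD), ?_⟩, hadj⟩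
    rw [hS, Finset.mem_union]
    rintro (hM | hT')
    · have hgD2 : ((g a ha : V) ∈ B \ M) := hgD
      rw [Finset.mem_sdiff] at hgD2
      exact hgD2.2 (hfeq ▸ hM)
    · obtain ⟨b', hb', hval⟩ := Finset.mem_image.mp hT'
      rw [hfeq] at hval
      have : b' = g a ha := Subtype.ext hval
      rw [this, hTsub, Finset.mem_filter, hg a ha] at hb'
      exact absurd hb'.2 (by decide : ¬ ((0 : Fin 2) = 1))
  -- coverage
  set W : Finset V := Tsub.image (fun b => (F (Sum.inl b)).1) with hW
  have hWloc : ∀ b ∈ Tsub, (F (Sum.inl b)).1 ∈ N b.1 ∩ U := by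
    intro b hb
    rw [hTsub, Finset.mem_filter] at hb
    rcases hloc b with ⟨h1, -⟩ | ⟨-, h2⟩
    · rw [hb.2] at h1
      exact absurd h1 (by decide : ¬ ((1 : Fin 2) = 0))
    · exact h2
  have hWU : W ⊆ U := by
    intro w hw
    obtain ⟨b, hb, rfl⟩ := Finset.mem_image.mp hw
    exact Finset.mem_inter.mp (hWloc b hb) |>.2
  have hWnbhd : W ⊆ nbhd G A S := by
    intro w hw
    obtain ⟨b, hb, rfl⟩ := Finset.mem_image.mp hw
    have h2 := Finset.mem_inter.mp (hWloc b hb) |>.1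
    rw [hN, Finset.mem_filter] at h2
    refine Finset.mem_filter.mpr ⟨h2.1, b.val, ?_, h2.2⟩
    rw [hS, Finset.mem_union]
    exact Or.inr (Finset.mem_image.mpr ⟨b, hb, rfl⟩)
  have hWcard : W.card = k := by
    rw [hW, Finset.card_image_of_injOn, hTk]
    intro b hb b' hb' heq
    rw [Finset.mem_coe] at hb hb'
    have h1 := (Finset.mem_filter.mp (hTsub ▸ hb)).2
    have h1' := (Finset.mem_filter.mp (hTsub ▸ hb')).2
    have : F (Sum.inl b) = F (Sum.inl b') := Prod.ext heq (by rw [h1, h1'])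
    exact Sum.inl.inj (hFinj this)
  have hdisjW : Disjoint (nbhd G A M) W := by
    rw [Finset.disjoint_left]
    intro w hwM hwW
    have := hWU hwW
    rw [hU, Finset.mem_sdiff] at this
    exact this.2 hwM
  have hcov : m + μ ≤ (nbhd G A S).card := by
    have hsubS : nbhd G A M ∪ W ⊆ nbhd G A S := by
      apply Finset.union_subset _ hWnbhd
      intro a ha
      obtain ⟨haA, b, hb, hab⟩ := Finset.mem_filter.mp ha
      exact Finset.mem_filter.mpr ⟨haA, b, Finset.mem_union_left _ hb, hab⟩
    have := Finset.card_le_card hsubS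
    rw [Finset.card_union_of_disjoint hdisjW, hpd2, hWcard] at this
    omega
  refine ⟨S, hSB, by omega, ⟨f, hfinj, fun a ha => ⟨(hfBS a ha).1, (hfBS a ha).2⟩⟩, by omega⟩

end Constr

theorem stmt_2 {V : Type*} [Fintype V] [DecidableEq V] (G : SimpleGraph V)
    [DecidableRel G.Adj] (A B : Finset V) (hdisj : Disjoint A B)
    (hbip : ∀ v w, G.Adj v w → (v ∈ A ∧ w ∈ B) ∨ (v ∈ B ∧ w ∈ A))
    (hdegA : ∀ a ∈ A, G.degree a = 3) (hdegB : ∀ b ∈ B, G.degree b = 2)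
    (mu : ℕ) (hmu₁ : ∃ B' ⊆ B, PDisjNbrs G B' ∧ B'.card = mu)
    (hmu₂ : ∀ B' ⊆ B, PDisjNbrs G B' → B'.card ≤ mu) :
    (∃ S ⊆ B, S.card ≤ B.card - A.card ∧ SatMatch G A (B \ S) ∧
      (nbhd G A S).card = A.card / 2 + mu) ∧
    (∀ S ⊆ B, S.card ≤ B.card - A.card → SatMatch G A (B \ S) →
      (nbhd G A S).card ≤ A.card / 2 + mu) := by
  have hcard : ∀ b ∈ B, (A.filter (fun a => G.Adj a b)).card = 2 :=
    fun b hb => nbA_card G A B hdisj hbip hdegB b hb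
  have hcard3 : ∀ a ∈ A, (B.filter (fun b => G.Adj a b)).card = 3 := by
    intro a ha
    rw [nbB_eq G A B hdisj hbip a ha, SimpleGraph.card_neighborFinset_eq_degree]
    exact hdegA a ha
  have hhs : 2 * B.card = 3 * A.card :=
    handshake G A B hdisj hbip hdegB hdegA
  have hupper : ∀ S ⊆ B, S.card ≤ B.card - A.card → SatMatch G A (B \ S) →
      (nbhd G A S).card ≤ A.card / 2 + mu := by
    intro S hSB hScard _
    have h1 := nbhd_card_le G A B hcard mu hmu₂ hdisj hbip S hSB
    omega
  refine ⟨?_, hupper⟩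
  obtain ⟨M, hMB, hMpd, hMcard⟩ := hmu₁
  have hpd2 := pdisj_nbhd_card G A B hcard M hMB hMpd
  obtain ⟨S, hSB, hScard, hSmatch, hScov⟩ :=
    exists_good_S G A B hcard hcard3 hhs M hMB hMpd hpd2
  refine ⟨S, hSB, hScard, hSmatch, ?_⟩
  have h2 := hupper S hSB hScard hSmatch
  omega
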